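/- arXiv:2408.09083 — 2 statements merged into one kernel-verified Lean document; each statement's English description precedes it below -/
import Mathlib

section
/- Let N ≥ 2, let T be a tree on vertex set Fin N rooted at a vertex r, and let s : Fin N → {0,1} be the unique proper 2-coloring of T with s(r)=0 (s takes different values on the two endpoints of every edge of T), with s̄ its bitwise complement. Then the one-round iHVA-tree state with all angles equal to π/2, i.e. the ordered product over all non-root vertices v of the gates exp(−(iπ/4)·Z_{parent(v)}Y_v) (each vertex's gate applied to the state after the gate of its parent) applied to |+⟩^{⊗N}, equals (|s⟩ + |s̄⟩)/√2. -/
open Matrix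

noncomputable section

/-- An `N`-qubit state: a vector in `ℂ^({0,1}^N)` indexed by bit strings. -/
abbrev QState (N : ℕ) := (Fin N → Fin 2) → ℂ

/-- An `N`-qubit operator: a `2^N × 2^N` complex matrix indexed by bit strings. -/
abbrev QOp (N : ℕ) := Matrix (Fin N → Fin 2) (Fin N → Fin 2) ℂ

def PauliX : Matrix (Fin 2) (Fin 2) ℂ := !![0, 1; 1, 0]
def PauliY : Matrix (Fin 2) (Fin 2) ℂ := !![0, -Complex.I; Complex.I, 0]
def PauliZ : Matrix (Fin 2) (Fin 2) ℂ := !![1, 0; 0, -1]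

/-- The Kronecker (tensor) product `⊗ₖ P k` of one `2 × 2` matrix per qubit. -/
def pauliString {N : ℕ} (P : Fin N → Matrix (Fin 2) (Fin 2) ℂ) : QOp N :=
  fun x y => ∏ k, P k (x k) (y k)

/-- The operator acting as `A` on qubit `i`, `B` on qubit `j` and identity elsewhere. -/
def twoQubitOp {N : ℕ} (A B : Matrix (Fin 2) (Fin 2) ℂ) (i j : Fin N) : QOp N :=
  pauliString (fun k => if k = i then A else if k = j then B else 1)

/-- Computational basis vector `|x⟩`. -/
def ket {N : ℕ} (x : Fin N → Fin 2) : QState N := fun y => if y = x then 1 else 0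

/-- `|+⟩^{⊗N}`, the uniform vector with all coordinates `2^{-N/2}`. -/
def plusN (N : ℕ) : QState N := fun _ => (((Real.sqrt 2)⁻¹ : ℝ) : ℂ) ^ N

/-- Expectation value `⟨ψ| A |ψ⟩`. -/
def expval {N : ℕ} (ψ : QState N) (A : QOp N) : ℂ :=
  ∑ x, (starRingEnd ℂ) (ψ x) * (A *ᵥ ψ) x

/-- The set of edges of `G`, each listed once as an ordered pair `(i,j)` with `i < j`. -/
def edgePairs {N : ℕ} (G : SimpleGraph (Fin N)) [DecidableRel G.Adj] :
    Finset (Fin N × Fin N) :=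
  Finset.univ.filter (fun p : Fin N × Fin N => p.1 < p.2 ∧ G.Adj p.1 p.2)

/-- The cut size `C(x)`: the number of edges `(i,j)` of `G` with `x i ≠ x j`. -/
def cutSize {N : ℕ} (G : SimpleGraph (Fin N)) [DecidableRel G.Adj] (x : Fin N → Fin 2) : ℕ :=
  ((edgePairs G).filter (fun p => x p.1 ≠ x p.2)).card

/-- The MaxCut Hamiltonian `H_MC = ∑_{(i,j) ∈ E} Z_i Z_j`. -/
def HMC {N : ℕ} (G : SimpleGraph (Fin N)) [DecidableRel G.Adj] : QOp N :=
  ∑ p ∈ edgePairs G, twoQubitOp PauliZ PauliZ p.1 p.2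

/-- The cut-counting observable `Ĉ = (1/2) ∑_{(i,j) ∈ E} (1 - Z_i Z_j)`. -/
def Chat {N : ℕ} (G : SimpleGraph (Fin N)) [DecidableRel G.Adj] : QOp N :=
  (1/2 : ℂ) • ∑ p ∈ edgePairs G, ((1 : QOp N) - twoQubitOp PauliZ PauliZ p.1 p.2)

/-- The gate `e^{-iθ Z_i Y_j / 2}`. -/
def gateZY {N : ℕ} (θ : ℝ) (i j : Fin N) : QOp N :=
  NormedSpace.exp ((-Complex.I * ((θ : ℂ) / 2)) • twoQubitOp PauliZ PauliY i j)

/-- The gate `e^{-iθ Y_i Z_j / 2}`. -/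
def gateYZ {N : ℕ} (θ : ℝ) (i j : Fin N) : QOp N :=
  NormedSpace.exp ((-Complex.I * ((θ : ℂ) / 2)) • twoQubitOp PauliY PauliZ i j)

end


noncomputable section AuxGHZ

open Matrix

lemma pauliString_mul {N : ℕ} (P Q : Fin N → Matrix (Fin 2) (Fin 2) ℂ) :
    pauliString P * pauliString Q = pauliString (fun k => P k * Q k) := by
  ext x y
  simp only [pauliString, Matrix.mul_apply, ← Finset.prod_mul_distrib]
  rw [← Fintype.prod_sum fun k (b : Fin 2) => P k (x k) b * Q k b (y k)]

lemma pauliString_one {N : ℕ} : pauliString (fun _ : Fin N => 1) = 1 := by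
  ext x y
  by_cases h : x = y
  · subst h; simp [pauliString, Matrix.one_apply]
  · obtain ⟨k, hk⟩ := Function.ne_iff.mp h
    rw [Matrix.one_apply_ne h]
    exact Finset.prod_eq_zero (Finset.mem_univ k) (Matrix.one_apply_ne hk)

lemma ZY_sq {N : ℕ} (p v : Fin N) :
    twoQubitOp PauliZ PauliY p v * twoQubitOp PauliZ PauliY p v = 1 := by
  have hZ : PauliZ * PauliZ = 1 := by
    rw [PauliZ, Matrix.mul_fin_two, Matrix.one_fin_two]; norm_num
  have hY : PauliY * PauliY = 1 := by
    rw [PauliY, Matrix.mul_fin_two, Matrix.one_fin_two]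
    norm_num [Complex.I_mul_I]
  rw [twoQubitOp, pauliString_mul]
  have he : (fun k => (if k = p then PauliZ else if k = v then PauliY else 1) *
      (if k = p then PauliZ else if k = v then PauliY else 1)) = fun _ : Fin N => 1 := by
    funext k
    split_ifs <;> simp [hZ, hY]
  rw [he, pauliString_one]

lemma exp_smul_of_sq {n : Type*} [Fintype n] [DecidableEq n]
    (M : Matrix n n ℂ) (h : M * M = 1) (c : ℂ) :
    NormedSpace.exp (c • M) =
      Complex.cosh c • (1 : Matrix n n ℂ) + Complex.sinh c • M := by
  letI : SeminormedRing (Matrix n n ℂ) := Matrix.linftyOpSemiNormedRing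
  letI : NormedRing (Matrix n n ℂ) := Matrix.linftyOpNormedRing
  letI : NormedAlgebra ℂ (Matrix n n ℂ) := Matrix.linftyOpNormedAlgebra
  let φ : (ℂ × ℂ) →ₐ[ℂ] Matrix n n ℂ :=
    { toFun := fun q => ((q.1 + q.2) / 2) • (1 : Matrix n n ℂ) + ((q.1 - q.2) / 2) • M
      map_one' := by norm_num
      map_mul' := by
        intro q r
        simp only [Prod.fst_mul, Prod.snd_mul, Matrix.add_mul, Matrix.mul_add,
          Matrix.smul_mul, Matrix.mul_smul, one_mul, mul_one, h, smul_smul]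
        match_scalars <;> ring
      map_zero' := by norm_num
      map_add' := by
        intro q r
        simp only [Prod.fst_add, Prod.snd_add]
        match_scalars <;> ring
      commutes' := by
        intro a
        simp only [Algebra.algebraMap_eq_smul_one, Prod.smul_def, smul_eq_mul,
          Prod.fst_one, Prod.snd_one]
        match_scalars <;> ring }
  have hφ : Continuous φ := by
    show Continuous fun q : ℂ × ℂ =>
      ((q.1 + q.2) / 2) • (1 : Matrix n n ℂ) + ((q.1 - q.2) / 2) • M
    exact (((continuous_fst.add continuous_snd).div_const 2).smul continuous_const).add
      (((continuous_fst.sub continuous_snd).div_const 2).smul continuous_const)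
  have key : c • M = φ (c, -c) := by
    show c • M = ((c + -c) / 2) • (1 : Matrix n n ℂ) + ((c - -c) / 2) • M
    match_scalars <;> ring
  rw [key]
  erw [← NormedSpace.map_exp φ hφ]
  have hexp : NormedSpace.exp ((c, -c) : ℂ × ℂ) = (Complex.exp c, Complex.exp (-c)) := by
    have h1 := NormedSpace.map_exp (RingHom.fst ℂ ℂ) continuous_fst ((c, -c) : ℂ × ℂ)
    have h2 := NormedSpace.map_exp (RingHom.snd ℂ ℂ) continuous_snd ((c, -c) : ℂ × ℂ)
    refine Prod.ext ?_ ?_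
    · simpa only [Complex.exp_eq_exp_ℂ, RingHom.coe_fst] using h1
    · simpa only [Complex.exp_eq_exp_ℂ, RingHom.coe_snd] using h2
  rw [hexp]
  show ((Complex.exp c + Complex.exp (-c)) / 2) • (1 : Matrix n n ℂ)
      + ((Complex.exp c - Complex.exp (-c)) / 2) • M = _
  rw [Complex.cosh, Complex.sinh]

lemma sqrt2_inv_eq : (Real.sqrt 2)⁻¹ = Real.sqrt 2 / 2 := by
  have h : Real.sqrt 2 * Real.sqrt 2 = 2 := Real.mul_self_sqrt (by norm_num)
  have h0 : Real.sqrt 2 ≠ 0 := by positivity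
  field_simp
  all_goals linarith [h]

lemma gateZY_eq {N : ℕ} (p v : Fin N) :
    gateZY (Real.pi / 2) p v =
      (((Real.sqrt 2)⁻¹ : ℝ) : ℂ) • (1 : QOp N)
        + (-(((Real.sqrt 2)⁻¹ : ℝ) : ℂ) * Complex.I) • twoQubitOp PauliZ PauliY p v := by
  have harg : (-Complex.I * (((Real.pi / 2 : ℝ) : ℂ) / 2))
      = -(((Real.pi / 4 : ℝ) : ℂ) * Complex.I) := by
    push_cast; ring
  have hcosh : Complex.cosh (-(((Real.pi / 4 : ℝ) : ℂ) * Complex.I))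
      = (((Real.sqrt 2)⁻¹ : ℝ) : ℂ) := by
    rw [Complex.cosh_neg, Complex.cosh_mul_I, ← Complex.ofReal_cos, Real.cos_pi_div_four,
      sqrt2_inv_eq]
  have hsinh : Complex.sinh (-(((Real.pi / 4 : ℝ) : ℂ) * Complex.I))
      = -(((Real.sqrt 2)⁻¹ : ℝ) : ℂ) * Complex.I := by
    rw [Complex.sinh_neg, Complex.sinh_mul_I, ← Complex.ofReal_sin, Real.sin_pi_div_four,
      sqrt2_inv_eq]
    push_cast
    ring
  rw [gateZY, harg, exp_smul_of_sq _ (ZY_sq p v), hcosh, hsinh]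

lemma ZY_mulVec {N : ℕ} (p v : Fin N) (hpv : p ≠ v) (ψ : QState N)
    (hψ : ∀ x b, ψ (Function.update x v b) = ψ x) (x : Fin N → Fin 2) :
    (twoQubitOp PauliZ PauliY p v *ᵥ ψ) x =
      (if x p = 0 then 1 else -1) * (if x v = 0 then -Complex.I else Complex.I) * ψ x := by
  classical
  have hZ0 : ∀ a b : Fin 2, a ≠ b → PauliZ a b = 0 := by
    intro a b hab; fin_cases a <;> fin_cases b <;> simp_all [PauliZ]
  have hu01 : Function.update x v 0 ≠ Function.update x v 1 := by
    intro hcontra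
    have := congrFun hcontra v
    simp at this
  have hzero : ∀ y : Fin N → Fin 2, y ≠ Function.update x v 0 → y ≠ Function.update x v 1 →
      twoQubitOp PauliZ PauliY p v x y * ψ y = 0 := by
    intro y h0 h1
    have hy : ∃ k, k ≠ v ∧ y k ≠ x k := by
      by_contra hcon
      push_neg at hcon
      have hyu : y = Function.update x v (y v) := by
        funext k
        by_cases hk : k = v
        · subst hk; simp
        · rw [Function.update_of_ne hk]; exact hcon k hk
      rcases (by decide : ∀ a : Fin 2, a = 0 ∨ a = 1) (y v) with h | h
      · exact h0 (by rw [hyu, h])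
      · exact h1 (by rw [hyu, h])
    obtain ⟨k, hkv, hk⟩ := hy
    have hz : twoQubitOp PauliZ PauliY p v x y = 0 := by
      simp only [twoQubitOp, pauliString]
      refine Finset.prod_eq_zero (Finset.mem_univ k) ?_
      by_cases hkp : k = p
      · subst hkp
        simp only [if_pos rfl]
        exact hZ0 _ _ (Ne.symm hk)
      · simp only [if_neg hkp, if_neg hkv]
        exact Matrix.one_apply_ne (Ne.symm hk)
    rw [hz, zero_mul]
  have hsum : (twoQubitOp PauliZ PauliY p v *ᵥ ψ) x
      = twoQubitOp PauliZ PauliY p v x (Function.update x v 0) * ψ (Function.update x v 0)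
        + twoQubitOp PauliZ PauliY p v x (Function.update x v 1) * ψ (Function.update x v 1) := by
    rw [Matrix.mulVec, dotProduct]
    exact Finset.sum_eq_add _ _ hu01
      (fun y _ hy => hzero y hy.1 hy.2)
      (fun hmem => absurd (Finset.mem_univ _) hmem)
      (fun hmem => absurd (Finset.mem_univ _) hmem)
  have hentry : ∀ b : Fin 2, twoQubitOp PauliZ PauliY p v x (Function.update x v b)
      = PauliZ (x p) (x p) * PauliY (x v) b := by
    intro b
    simp only [twoQubitOp, pauliString]
    rw [Finset.prod_eq_mul p v hpv
      (fun k _ hk => by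
        simp only [if_neg hk.1, if_neg hk.2]
        rw [Function.update_of_ne hk.2]
        exact Matrix.one_apply_eq _)
      (fun hmem => absurd (Finset.mem_univ _) hmem)
      (fun hmem => absurd (Finset.mem_univ _) hmem)]
    simp [hpv, Ne.symm hpv, Function.update_of_ne hpv, Function.update_self]
  have hY : ∀ a : Fin 2, PauliY a 0 + PauliY a 1 = (if a = 0 then -Complex.I else Complex.I) := by
    intro a; fin_cases a <;> simp [PauliY]
  have hZ : ∀ a : Fin 2, PauliZ a a = (if a = 0 then 1 else -1) := by
    intro a; fin_cases a <;> simp [PauliZ]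
  rw [hsum, hentry 0, hentry 1, hψ x 0, hψ x 1, hZ (x p), ← hY (x v)]
  ring

lemma gate_apply {N : ℕ} (p v : Fin N) (hpv : p ≠ v) (ψ : QState N)
    (hψ : ∀ x b, ψ (Function.update x v b) = ψ x) (x : Fin N → Fin 2) :
    (gateZY (Real.pi / 2) p v *ᵥ ψ) x =
      (if x v = x p then 0 else ((Real.sqrt 2 : ℝ) : ℂ)) * ψ x := by
  have hs2 : ((Real.sqrt 2 : ℝ) : ℂ) = 2 * (((Real.sqrt 2)⁻¹ : ℝ) : ℂ) := by
    have h : (Real.sqrt 2) = 2 * (Real.sqrt 2)⁻¹ := by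
      rw [sqrt2_inv_eq]; ring
    exact_mod_cast congrArg Complex.ofReal h
  rw [gateZY_eq, Matrix.add_mulVec, Matrix.smul_mulVec, Matrix.smul_mulVec,
    Matrix.one_mulVec]
  simp only [Pi.add_apply, Pi.smul_apply, smul_eq_mul]
  rw [ZY_mulVec p v hpv ψ hψ x]
  have t10 : ((1 : Fin 2) = 0) = False := by decide
  have t01 : ((0 : Fin 2) = 1) = False := by decide
  have t00 : ((0 : Fin 2) = 0) = True := by decide
  have t11 : ((1 : Fin 2) = 1) = True := by decide
  rcases (by decide : ∀ a : Fin 2, a = 0 ∨ a = 1) (x p) with hp | hp <;>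
    rcases (by decide : ∀ a : Fin 2, a = 0 ∨ a = 1) (x v) with hv | hv <;>
      rw [hp, hv] <;> simp only [t10, t01, t00, t11, if_true, if_false]
  · linear_combination ((((Real.sqrt 2)⁻¹ : ℝ) : ℂ) * ψ x) * Complex.I_mul_I
  · linear_combination (-((((Real.sqrt 2)⁻¹ : ℝ) : ℂ) * ψ x)) * Complex.I_mul_I - ψ x * hs2
  · linear_combination (-((((Real.sqrt 2)⁻¹ : ℝ) : ℂ) * ψ x)) * Complex.I_mul_I - ψ x * hs2
  · linear_combination ((((Real.sqrt 2)⁻¹ : ℝ) : ℂ) * ψ x) * Complex.I_mul_I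

def psiA {N : ℕ} (s : Fin N → Fin 2) (A : Finset (Fin N)) : QState N :=
  fun x => (((Real.sqrt 2)⁻¹ : ℝ) : ℂ) ^ (N + 1 - A.card) *
    ((if ∀ u ∈ A, x u = s u then 1 else 0) + (if ∀ u ∈ A, x u = 1 - s u then 1 else 0))

lemma psi_step {N : ℕ} (s : Fin N → Fin 2) (A : Finset (Fin N)) (p v : Fin N)
    (hp : p ∈ A) (hv : v ∉ A) (hsv : s v = 1 - s p) :
    gateZY (Real.pi / 2) p v *ᵥ psiA s A = psiA s (insert v A) := by
  classical
  have hpv : p ≠ v := by rintro rfl; exact hv hp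
  have hcard : A.card ≤ N := le_trans (Finset.card_le_univ A) (by simp)
  have hs2c : ((Real.sqrt 2 : ℝ) : ℂ) * (((Real.sqrt 2)⁻¹ : ℝ) : ℂ) = 1 := by
    rw [← Complex.ofReal_mul, mul_inv_cancel₀ (by positivity : Real.sqrt 2 ≠ 0)]
    norm_num
  have hind : ∀ x b, psiA s A (Function.update x v b) = psiA s A x := by
    intro x b
    have hupd : ∀ u ∈ A, Function.update x v b u = x u := fun u hu =>
      Function.update_of_ne (by rintro rfl; exact hv hu) _ _
    have h1 : (∀ u ∈ A, Function.update x v b u = s u) ↔ (∀ u ∈ A, x u = s u) :=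
      forall₂_congr fun u hu => by rw [hupd u hu]
    have h2 : (∀ u ∈ A, Function.update x v b u = 1 - s u) ↔ (∀ u ∈ A, x u = 1 - s u) :=
      forall₂_congr fun u hu => by rw [hupd u hu]
    simp only [psiA, h1, h2]
  funext x
  rw [gate_apply p v hpv _ hind x]
  have e1 : N + 1 - A.card = (N - A.card) + 1 := by omega
  have e2 : N + 1 - (A.card + 1) = N - A.card := by omega
  have f1 : ∀ a : Fin 2, ¬ a = 1 - a := by decide
  have f2 : ∀ a b : Fin 2, ¬ a = b → a = 1 - b := by decide
  have f3 : ∀ a : Fin 2, 1 - (1 - a) = a := by decide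
  simp only [psiA, Finset.forall_mem_insert, Finset.card_insert_of_notMem hv, e1, e2]
  by_cases h1 : ∀ u ∈ A, x u = s u
  · have hxp : x p = s p := h1 p hp
    have h2 : ¬ ∀ u ∈ A, x u = 1 - s u := by
      intro h2
      exact f1 (s p) (hxp ▸ h2 p hp)
    by_cases hxv : x v = s p
    · have hvp : x v = x p := by rw [hxv, hxp]
      have hvv : ¬ x v = s v := by rw [hxv, hsv]; exact f1 (s p)
      have hJ1 : ¬ (x v = s v ∧ ∀ u ∈ A, x u = s u) := fun hc => hvv hc.1
      have hJ2 : ¬ (x v = 1 - s v ∧ ∀ u ∈ A, x u = 1 - s u) := fun hc => h2 hc.2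
      rw [if_pos hvp, if_neg hJ1, if_neg hJ2]
      ring
    · have hvv : x v = s v := by rw [hsv]; exact f2 _ _ hxv
      have hvp : ¬ x v = x p := by rw [hxp]; exact hxv
      have hJ1 : (x v = s v ∧ ∀ u ∈ A, x u = s u) := ⟨hvv, h1⟩
      have hJ2 : ¬ (x v = 1 - s v ∧ ∀ u ∈ A, x u = 1 - s u) := fun hc => h2 hc.2
      rw [if_neg hvp, if_pos h1, if_neg h2, if_pos hJ1, if_neg hJ2, pow_succ]
      linear_combination ((((Real.sqrt 2)⁻¹ : ℝ) : ℂ) ^ (N - A.card)) * hs2c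
  · by_cases h2 : ∀ u ∈ A, x u = 1 - s u
    · have hxp : x p = 1 - s p := h2 p hp
      by_cases hxv : x v = s p
      · have hvp : ¬ x v = x p := by
          rw [hxv, hxp]; exact f1 (s p)
        have hJ : x v = 1 - s v := by rw [hxv, hsv, f3]
        have hJ1 : ¬ (x v = s v ∧ ∀ u ∈ A, x u = s u) := fun hc => h1 hc.2
        have hJ2 : (x v = 1 - s v ∧ ∀ u ∈ A, x u = 1 - s u) := ⟨hJ, h2⟩
        rw [if_neg hvp, if_neg h1, if_pos h2, if_neg hJ1, if_pos hJ2, pow_succ]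
        linear_combination ((((Real.sqrt 2)⁻¹ : ℝ) : ℂ) ^ (N - A.card)) * hs2c
      · have hvp : x v = x p := by rw [hxp]; exact f2 _ _ hxv
        have hJ2 : ¬ x v = 1 - s v := by rw [hsv, f3]; exact hxv
        have hJ1 : ¬ (x v = s v ∧ ∀ u ∈ A, x u = s u) := fun hc => h1 hc.2
        have hJ2' : ¬ (x v = 1 - s v ∧ ∀ u ∈ A, x u = 1 - s u) := fun hc => hJ2 hc.1
        rw [if_pos hvp, if_neg hJ1, if_neg hJ2']
        ring
    · have hJ1 : ¬ (x v = s v ∧ ∀ u ∈ A, x u = s u) := fun hc => h1 hc.2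
      have hJ2 : ¬ (x v = 1 - s v ∧ ∀ u ∈ A, x u = 1 - s u) := fun hc => h2 hc.2
      rw [if_neg h1, if_neg h2, if_neg hJ1, if_neg hJ2]
      ring

end AuxGHZ

noncomputable section AuxGHZ2

open Matrix

lemma fold_psi {N : ℕ} (parent : Fin N → Fin N) (s : Fin N → Fin 2) :
    ∀ (l : List (Fin N)) (A : Finset (Fin N)),
      l.Nodup → (∀ v ∈ l, v ∉ A) →
      (∀ v ∈ l, s v = 1 - s (parent v)) →
      (∀ pre w suf, l = pre ++ w :: suf → parent w ∈ A ∨ parent w ∈ pre) →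
      l.foldl (fun ψ v => gateZY (Real.pi / 2) (parent v) v *ᵥ ψ) (psiA s A)
        = psiA s (A ∪ l.toFinset)
  | [], A, _, _, _, _ => by simp
  | w :: l, A, hnd, hA, hcol, hord => by
    have hwA : w ∉ A := hA w (List.mem_cons_self)
    have hpw : parent w ∈ A := by
      rcases hord [] w l rfl with h | h
      · exact h
      · exact absurd h (List.not_mem_nil)
    have hstep := psi_step s A (parent w) w hpw hwA (hcol w (List.mem_cons_self))
    rw [List.foldl_cons, hstep]
    have hrec := fold_psi parent s l (insert w A)
      (List.nodup_cons.mp hnd).2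
      (fun v hv hc => by
        rcases Finset.mem_insert.mp hc with h | h
        · exact (List.nodup_cons.mp hnd).1 (h ▸ hv)
        · exact hA v (List.mem_cons_of_mem _ hv) h)
      (fun v hv => hcol v (List.mem_cons_of_mem _ hv))
      (fun pre w' suf heq => by
        rcases hord (w :: pre) w' suf (by rw [heq]; rfl) with h | h
        · exact Or.inl (Finset.mem_insert_of_mem h)
        · rcases List.mem_cons.mp h with h | h
          · exact Or.inl (h ▸ Finset.mem_insert_self w A)
          · exact Or.inr h)
    rw [hrec, List.toFinset_cons, Finset.insert_union, Finset.union_insert]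


/-- For a tree `T` on `Fin N` (`N ≥ 2`) rooted at `r`, with `parent` the
parent map, `s` the proper 2-coloring with `s r = 0`, and the gates
`exp (−(iπ/4)·Z_{parent v} Y_v)` applied to `|+⟩^{⊗N}` in any hierarchy-respecting order `L`,
the resulting state equals `(|s⟩ + |s̄⟩)/√2`. -/
theorem iHVA_tree_state_eq_GHZ {N : ℕ} (hN : 2 ≤ N)
    (T : SimpleGraph (Fin N)) (hT : T.IsTree) (r : Fin N)
    (parent : Fin N → Fin N)
    (hparent : ∀ v, v ≠ r → T.Adj (parent v) v ∧ T.dist r (parent v) + 1 = T.dist r v)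
    (s : Fin N → Fin 2) (hsr : s r = 0)
    (hs : ∀ u v, T.Adj u v → s u ≠ s v)
    (L : List (Fin N)) (hnodup : L.Nodup) (hmem : ∀ v, v ∈ L ↔ v ≠ r)
    (horder : ∀ v ∈ L, parent v ≠ r → L.idxOf (parent v) < L.idxOf v) :
    L.foldl (fun ψ v => gateZY (Real.pi / 2) (parent v) v *ᵥ ψ) (plusN N)
      = (((Real.sqrt 2)⁻¹ : ℝ) : ℂ) • (ket s + ket (fun v => 1 - s v)) := by
  classical
  have hcol : ∀ v ∈ L, s v = 1 - s (parent v) := by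
    intro v hv
    have hvr : v ≠ r := (hmem v).mp hv
    have hne := hs _ _ (hparent v hvr).1
    exact (by decide : ∀ a b : Fin 2, ¬ a = b → b = 1 - a) _ _ hne
  have hstart : plusN N = psiA s {r} := by
    funext x
    have h10 : (1 : Fin 2) - 0 = 1 := by decide
    simp only [psiA, plusN, Finset.card_singleton, Finset.mem_singleton, Nat.add_sub_cancel,
      forall_eq, hsr, h10]
    rcases (by decide : ∀ a : Fin 2, a = 0 ∨ a = 1) (x r) with h | h <;>
      simp [h]
  have hord : ∀ pre w suf, L = pre ++ w :: suf → parent w ∈ ({r} : Finset (Fin N)) ∨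
      parent w ∈ pre := by
    intro pre w suf heq
    by_cases hpr : parent w = r
    · exact Or.inl (by rw [hpr]; exact Finset.mem_singleton_self r)
    · right
      have hwL : w ∈ L := by rw [heq]; simp
      have hlt := horder w hwL hpr
      have hwnp : w ∉ pre := by
        intro hcon
        have hnd := hnodup
        rw [heq] at hnd
        exact (List.nodup_append'.mp hnd).2.2 hcon List.mem_cons_self
      have hidx : L.idxOf w = pre.length := by
        rw [heq, List.idxOf_append_of_notMem hwnp, List.idxOf_cons_self, Nat.add_zero]
      rw [hidx] at hlt
      by_contra hcon
      rw [heq, List.idxOf_append_of_notMem hcon] at hlt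
      omega
  have hres := fold_psi parent s L {r} hnodup
    (fun v hv hc => ((hmem v).mp hv) (Finset.mem_singleton.mp hc))
    hcol hord
  have huniv : ({r} : Finset (Fin N)) ∪ L.toFinset = Finset.univ := by
    ext u
    simp only [Finset.mem_union, Finset.mem_singleton, List.mem_toFinset, Finset.mem_univ,
      iff_true]
    rcases eq_or_ne u r with h | h
    · exact Or.inl h
    · exact Or.inr ((hmem u).mpr h)
  rw [hstart, hres, huniv]
  funext x
  have hcard : (Finset.univ : Finset (Fin N)).card = N := by simp
  have he : N + 1 - N = 1 := by omega
  have c1 : (∀ u ∈ Finset.univ, x u = s u) ↔ x = s := by simp [funext_iff]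
  have c2 : (∀ u ∈ (Finset.univ : Finset (Fin N)), x u = 1 - s u)
      ↔ x = fun v => 1 - s v := by simp [funext_iff]
  simp only [psiA, hcard, he, pow_one, Pi.smul_apply, Pi.add_apply, ket, smul_eq_mul]
  rw [if_congr c1 rfl rfl, if_congr c2 rfl rfl]

end AuxGHZ2
end

section
/- Let N ≥ 2, let T be a tree on vertex set Fin N with edge set E (so |E| = N−1), let s : Fin N → {0,1} be a proper 2-coloring of T, and let s̄ be its bitwise complement. Then the GHZ-type vector ψ = (|s⟩ + |s̄⟩)/√2 satisfies H_MC ψ = −(N−1)·ψ, and −(N−1) is the smallest eigenvalue of H_MC; i.e. ψ is a ground state of the MaxCut Hamiltonian of the tree. -/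
open Matrix

noncomputable section AuxGHZ

/-- Diagonal value of `PauliZ`. -/
def zf (b : Fin 2) : ℂ := if b = 0 then 1 else -1

lemma pauliZ_apply (a b : Fin 2) : PauliZ a b = if a = b then zf a else 0 := by
  fin_cases a <;> fin_cases b <;> simp [PauliZ, zf]

lemma zf_mul (a b : Fin 2) : zf a * zf b = if a = b then 1 else -1 := by
  fin_cases a <;> fin_cases b <;> norm_num [zf]

lemma twoQubitZZ_apply {N : ℕ} (i j : Fin N) (hij : i ≠ j) (x y : Fin N → Fin 2) :
    twoQubitOp PauliZ PauliZ i j x y = if y = x then zf (x i) * zf (x j) else 0 := by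
  unfold twoQubitOp pauliString
  by_cases h : y = x
  · subst h
    rw [if_pos rfl]
    have key : ∀ k : Fin N, (if k = i then PauliZ else if k = j then PauliZ else 1) (y k) (y k)
        = (if k = i then zf (y i) else 1) * (if k = j then zf (y j) else 1) := by
      intro k
      by_cases hki : k = i
      · subst hki
        rw [if_pos rfl, if_pos rfl, if_neg hij, mul_one, pauliZ_apply, if_pos rfl]
      · rw [if_neg hki, if_neg hki, one_mul]
        by_cases hkj : k = j
        · subst hkj
          rw [if_pos rfl, if_pos rfl, pauliZ_apply, if_pos rfl]
        · rw [if_neg hkj, if_neg hkj, Matrix.one_apply_eq]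
    rw [Finset.prod_congr rfl (fun k _ => key k), Finset.prod_mul_distrib,
      Finset.prod_ite_eq' Finset.univ i (fun _ => zf (y i)),
      Finset.prod_ite_eq' Finset.univ j (fun _ => zf (y j))]
    simp
  · rw [if_neg h]
    obtain ⟨k, hk⟩ := Function.ne_iff.mp h
    apply Finset.prod_eq_zero (Finset.mem_univ k)
    dsimp only
    have hxk : ¬ x k = y k := fun hh => hk hh.symm
    by_cases hki : k = i
    · subst hki; rw [if_pos rfl, pauliZ_apply, if_neg hxk]
    · rw [if_neg hki]
      by_cases hkj : k = j
      · subst hkj; rw [if_pos rfl, pauliZ_apply, if_neg hxk]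
      · rw [if_neg hkj, Matrix.one_apply_ne hxk]

lemma aux_sum_mulVec {ι n : Type*} [Fintype n] (s : Finset ι) (A : ι → Matrix n n ℂ)
    (v : n → ℂ) : (∑ i ∈ s, A i) *ᵥ v = ∑ i ∈ s, A i *ᵥ v := by
  funext x
  simp only [Matrix.mulVec, dotProduct, Matrix.sum_apply, Finset.sum_apply, Finset.sum_mul]
  rw [Finset.sum_comm]

/-- The diagonal value of `H_MC` at basis string `x`. -/
def dval {N : ℕ} (G : SimpleGraph (Fin N)) [DecidableRel G.Adj] (x : Fin N → Fin 2) : ℝ :=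
  ∑ p ∈ edgePairs G, (if x p.1 = x p.2 then (1 : ℝ) else -1)

lemma HMC_mulVec {N : ℕ} (G : SimpleGraph (Fin N)) [DecidableRel G.Adj]
    (ψ : QState N) (x : Fin N → Fin 2) :
    (HMC G *ᵥ ψ) x = ((dval G x : ℝ) : ℂ) * ψ x := by
  unfold HMC
  rw [aux_sum_mulVec, Finset.sum_apply]
  have key : ∀ p ∈ edgePairs G, (twoQubitOp PauliZ PauliZ p.1 p.2 *ᵥ ψ) x
      = (if x p.1 = x p.2 then (1 : ℂ) else -1) * ψ x := by
    intro p hp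
    have hne : p.1 ≠ p.2 := ne_of_lt (Finset.mem_filter.mp hp).2.1
    unfold Matrix.mulVec dotProduct
    dsimp only
    rw [Finset.sum_congr rfl fun y _ => by rw [twoQubitZZ_apply _ _ hne, ite_mul, zero_mul]]
    rw [Finset.sum_ite_eq' Finset.univ x (fun y => zf (x p.1) * zf (x p.2) * ψ y),
      if_pos (Finset.mem_univ x), zf_mul]
  rw [Finset.sum_congr rfl key, ← Finset.sum_mul]
  congr 1
  unfold dval
  push_cast
  exact Finset.sum_congr rfl fun p _ => by split <;> simp

lemma HMC_mulVec_ket {N : ℕ} (G : SimpleGraph (Fin N)) [DecidableRel G.Adj]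
    (t : Fin N → Fin 2) :
    HMC G *ᵥ ket t = ((dval G t : ℝ) : ℂ) • ket t := by
  funext x
  rw [HMC_mulVec, Pi.smul_apply, smul_eq_mul]
  unfold ket
  by_cases h : x = t
  · subst h; rfl
  · simp [h]

lemma card_edgePairs {N : ℕ} (G : SimpleGraph (Fin N)) [DecidableRel G.Adj] :
    (edgePairs G).card = G.edgeFinset.card := by
  apply Finset.card_bij (fun p _ => s(p.1, p.2))
  · intro p hp
    exact SimpleGraph.mem_edgeFinset.mpr (Finset.mem_filter.mp hp).2.2
  · intro p hp q hq h
    have hp' := (Finset.mem_filter.mp hp).2.1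
    have hq' := (Finset.mem_filter.mp hq).2.1
    rcases Sym2.eq_iff.mp h with ⟨h1, h2⟩ | ⟨h1, h2⟩
    · exact Prod.ext h1 h2
    · have hcontra : q.2 < q.1 := by rw [← h1, ← h2]; exact hp'
      exact absurd hq' (lt_asymm hcontra)
  · intro e he
    induction e using Sym2.ind with
    | _ a b =>
      have hadj : G.Adj a b := SimpleGraph.mem_edgeFinset.mp he
      rcases hadj.ne.lt_or_gt with hab | hba
      · exact ⟨(a, b), Finset.mem_filter.mpr ⟨Finset.mem_univ _, hab, hadj⟩, rfl⟩
      · exact ⟨(b, a), Finset.mem_filter.mpr ⟨Finset.mem_univ _, hba, hadj.symm⟩, Sym2.eq_swap⟩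

lemma dval_of_proper {N : ℕ} (G : SimpleGraph (Fin N)) [DecidableRel G.Adj]
    (t : Fin N → Fin 2) (ht : ∀ u v, G.Adj u v → t u ≠ t v) :
    dval G t = -((edgePairs G).card : ℝ) := by
  unfold dval
  rw [Finset.sum_congr rfl (fun p hp => if_neg (ht _ _ (Finset.mem_filter.mp hp).2.2)),
    Finset.sum_const]
  simp

lemma dval_ge {N : ℕ} (G : SimpleGraph (Fin N)) [DecidableRel G.Adj]
    (x : Fin N → Fin 2) : -((edgePairs G).card : ℝ) ≤ dval G x := by
  unfold dval
  calc -((edgePairs G).card : ℝ) = ∑ _p ∈ edgePairs G, (-1 : ℝ) := by simp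
    _ ≤ _ := Finset.sum_le_sum fun p _ => by split <;> norm_num

end AuxGHZ

/-- For a tree `T` on `Fin N` (`N ≥ 2`) with proper 2-coloring `s`, the
GHZ-type vector `ψ = (|s⟩ + |s̄⟩)/√2` satisfies `H_MC ψ = −(N−1) ψ` and `−(N−1)` is the
smallest eigenvalue of `H_MC`; i.e. `ψ` is a ground state of the tree's MaxCut Hamiltonian. -/
theorem GHZ_is_ground_state_of_tree_HMC {N : ℕ} (hN : 2 ≤ N)
    (T : SimpleGraph (Fin N)) [DecidableRel T.Adj] (hT : T.IsTree)
    (s : Fin N → Fin 2) (hs : ∀ u v, T.Adj u v → s u ≠ s v) :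
    HMC T *ᵥ ((((Real.sqrt 2)⁻¹ : ℝ) : ℂ) • (ket s + ket (fun v => 1 - s v)))
        = ((-((N : ℝ) - 1) : ℝ) : ℂ) •
            ((((Real.sqrt 2)⁻¹ : ℝ) : ℂ) • (ket s + ket (fun v => 1 - s v))) ∧
    IsLeast {μ : ℝ | ∃ ψ : QState N, ψ ≠ 0 ∧ HMC T *ᵥ ψ = (μ : ℂ) • ψ} (-((N : ℝ) - 1)) := by
  have hcard : ((edgePairs T).card : ℝ) = (N : ℝ) - 1 := by
    have h1 := hT.card_edgeFinset
    rw [card_edgePairs]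
    rw [Fintype.card_fin] at h1
    have : (T.edgeFinset.card : ℝ) + 1 = (N : ℝ) := by exact_mod_cast congrArg Nat.cast h1
    linarith
  have hs' : ∀ u v, T.Adj u v → (1 - s u) ≠ (1 - s v) := by
    intro u v huv h
    exact hs u v huv (by omega)
  have hds : dval T s = -((N : ℝ) - 1) := by rw [dval_of_proper T s hs, hcard]
  have hds' : dval T (fun v => 1 - s v) = -((N : ℝ) - 1) := by
    rw [dval_of_proper T _ hs', hcard]
  constructor
  · rw [Matrix.mulVec_smul, Matrix.mulVec_add, HMC_mulVec_ket, HMC_mulVec_ket, hds, hds',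
      ← smul_add, smul_comm]
  · constructor
    · refine ⟨ket s, ?_, ?_⟩
      · intro h
        have := congrFun h s
        simp [ket] at this
      · rw [HMC_mulVec_ket, hds]
    · rintro μ ⟨ψ, hψ, heig⟩
      obtain ⟨x, hx⟩ := Function.ne_iff.mp hψ
      have hx' : ψ x ≠ 0 := hx
      have h1 : ((dval T x : ℝ) : ℂ) * ψ x = (μ : ℂ) * ψ x := by
        have := congrFun heig x
        rwa [HMC_mulVec, Pi.smul_apply, smul_eq_mul] at this
      have h2 : dval T x = μ := by
        exact_mod_cast mul_right_cancel₀ hx' h1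
      calc -((N : ℝ) - 1) = -((edgePairs T).card : ℝ) := by rw [hcard]
        _ ≤ dval T x := dval_ge T x
        _ = μ := h2
end
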